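/- For every β ∈ (0,1) and x ≥ 0, one has x^β = (β / Γ(1-β)) · ∫₀^∞ (1 - e^{-x z}) z^{-(1+β)} dz. -/

import Mathlib

open MeasureTheory Real Set

lemma aux_integrable {β : ℝ} (hβ0 : 0 < β) (hβ1 : β < 1) {u : ℝ} (hu : 0 < u) :
    IntegrableOn (fun z : ℝ => z ^ (-β) * Real.exp (-(u * z))) (Ioi 0) := by
  have h0 := Real.GammaIntegral_convergent (s := 1 - β) (by linarith)
  rw [show (1:ℝ) - β - 1 = -β by ring] at h0
  have h1 : IntegrableOn (fun z : ℝ => Real.exp (-(u * z)) * (u * z) ^ (-β)) (Ioi 0) := by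
    have := (integrableOn_Ioi_comp_mul_left_iff
      (fun z : ℝ => Real.exp (-z) * z ^ (-β)) 0 hu).mpr (by simpa using h0)
    simpa using this
  have h2 : IntegrableOn (fun z : ℝ => u ^ β * (Real.exp (-(u * z)) * (u * z) ^ (-β))) (Ioi 0) :=
    h1.const_mul (u ^ β)
  refine IntegrableOn.congr_fun h2 (fun z hz => ?_) measurableSet_Ioi
  have hz' : (0:ℝ) < z := hz
  rw [Real.mul_rpow hu.le hz'.le]
  have h3 : u ^ β * u ^ (-β) = 1 := by
    rw [← Real.rpow_add hu]; simp
  calc u ^ β * (Real.exp (-(u * z)) * (u ^ (-β) * z ^ (-β)))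
      = (u ^ β * u ^ (-β)) * (z ^ (-β) * Real.exp (-(u * z))) := by ring
    _ = z ^ (-β) * Real.exp (-(u * z)) := by rw [h3, one_mul]

lemma aux_value {β : ℝ} (hβ0 : 0 < β) (hβ1 : β < 1) {u : ℝ} (hu : 0 < u) :
    (∫ z in Ioi (0:ℝ), z ^ (-β) * Real.exp (-(u * z))) =
      Real.Gamma (1 - β) * u ^ (β - 1) := by
  have h := Real.integral_rpow_mul_exp_neg_mul_Ioi (a := 1 - β) (r := u) (by linarith) hu
  rw [show (1:ℝ) - β - 1 = -β by ring] at h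
  rw [h, one_div, Real.inv_rpow hu.le, ← Real.rpow_neg hu.le,
    show -(1 - β) = β - 1 by ring]
  ring

theorem stmt0 (β x : ℝ) (hβ : β ∈ Set.Ioo (0:ℝ) 1) (hx : 0 ≤ x) :
    x ^ β = (β / Real.Gamma (1 - β)) *
      ∫ z in Set.Ioi (0:ℝ), (1 - Real.exp (-(x * z))) * z ^ (-(1 + β)) := by
  obtain ⟨hβ0, hβ1⟩ := hβ
  have hΓ : 0 < Real.Gamma (1 - β) := Real.Gamma_pos_of_pos (by linarith)
  -- inner u-integral
  have hzint : ∀ z ∈ Ioi (0:ℝ),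
      (∫ u in Ioc (0:ℝ) x, z ^ (-β) * Real.exp (-(u * z))) =
        (1 - Real.exp (-(x * z))) * z ^ (-(1 + β)) := by
    intro z hz
    have hz' : (0:ℝ) < z := hz
    rw [← intervalIntegral.integral_of_le hx, intervalIntegral.integral_const_mul]
    have hF : ∀ u ∈ uIcc (0:ℝ) x,
        HasDerivAt (fun u => -(Real.exp (-(u * z)) / z)) (Real.exp (-(u * z))) u := by
      intro u _
      have h : HasDerivAt (fun u => -(Real.exp (-(u * z)) / z)) _ u :=
        ((((hasDerivAt_mul_const (c := z) (x := u)).neg).exp).div_const z).neg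
      convert h using 1
      field_simp
      simp [mul_comm]
    have hcont : IntervalIntegrable (fun u => Real.exp (-(u * z))) volume 0 x :=
      (Real.continuous_exp.comp (by continuity)).intervalIntegrable 0 x
    rw [intervalIntegral.integral_eq_sub_of_hasDerivAt hF hcont]
    have hzne : z ≠ 0 := hz'.ne'
    have hrpow : z ^ (-(1 + β)) = z ^ (-β) / z := by
      rw [show -(1 + β) = -β + -1 by ring, Real.rpow_add hz', Real.rpow_neg_one]
      ring
    rw [hrpow]
    field_simp
    simp [Real.exp_zero]
    ring
  -- inner z-integral
  have huint : ∀ u ∈ Ioc (0:ℝ) x,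
      (∫ z in Ioi (0:ℝ), z ^ (-β) * Real.exp (-(u * z))) =
        Real.Gamma (1 - β) * u ^ (β - 1) := fun u hu => aux_value hβ0 hβ1 hu.1
  -- measurability
  have hmeas : AEStronglyMeasurable
      (Function.uncurry fun u z : ℝ => z ^ (-β) * Real.exp (-(u * z)))
      ((volume.restrict (Ioc (0:ℝ) x)).prod (volume.restrict (Ioi (0:ℝ)))) := by
    apply Measurable.aestronglyMeasurable
    fun_prop
  -- integrability on product
  have hprod : Integrable (Function.uncurry fun u z : ℝ => z ^ (-β) * Real.exp (-(u * z)))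
      ((volume.restrict (Ioc (0:ℝ) x)).prod (volume.restrict (Ioi (0:ℝ)))) := by
    rw [MeasureTheory.integrable_prod_iff hmeas]
    constructor
    · filter_upwards [ae_restrict_mem measurableSet_Ioc] with u hu
      exact aux_integrable hβ0 hβ1 hu.1
    · have hgi : IntegrableOn (fun u : ℝ => Real.Gamma (1 - β) * u ^ (β - 1)) (Ioc 0 x) := by
        have := (intervalIntegral.intervalIntegrable_rpow' (a := 0) (b := x) (r := β - 1) (by linarith))
        rw [intervalIntegrable_iff, uIoc_of_le hx] at this
        exact this.const_mul _
      refine hgi.congr ?_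
      filter_upwards [ae_restrict_mem measurableSet_Ioc] with u hu
      simp only [Function.uncurry_apply_pair]
      rw [show (∫ z in Ioi (0:ℝ), ‖z ^ (-β) * Real.exp (-(u * z))‖) =
            ∫ z in Ioi (0:ℝ), z ^ (-β) * Real.exp (-(u * z)) from
          setIntegral_congr_fun measurableSet_Ioi fun z hz =>
            Real.norm_of_nonneg (mul_nonneg (Real.rpow_nonneg (le_of_lt (mem_Ioi.mp hz)) _) (Real.exp_nonneg _)), aux_value hβ0 hβ1 hu.1]
  have key : (∫ z in Ioi (0:ℝ), (1 - Real.exp (-(x * z))) * z ^ (-(1 + β))) =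
      Real.Gamma (1 - β) * (x ^ β / β) := by
    calc (∫ z in Ioi (0:ℝ), (1 - Real.exp (-(x * z))) * z ^ (-(1 + β)))
        = ∫ z in Ioi (0:ℝ), ∫ u in Ioc (0:ℝ) x, z ^ (-β) * Real.exp (-(u * z)) :=
          setIntegral_congr_fun (μ := volume) measurableSet_Ioi (fun z hz => (hzint z hz).symm)
      _ = ∫ u in Ioc (0:ℝ) x, ∫ z in Ioi (0:ℝ), z ^ (-β) * Real.exp (-(u * z)) :=
          (MeasureTheory.integral_integral_swap hprod).symm
      _ = ∫ u in Ioc (0:ℝ) x, Real.Gamma (1 - β) * u ^ (β - 1) :=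
          setIntegral_congr_fun measurableSet_Ioc huint
      _ = Real.Gamma (1 - β) * (x ^ β / β) := by
          rw [MeasureTheory.integral_const_mul, ← intervalIntegral.integral_of_le hx,
            integral_rpow (Or.inl (by linarith)), show β - 1 + 1 = β by ring,
            Real.zero_rpow hβ0.ne', sub_zero]
  rw [key]
  field_simp
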